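/- Let D_n = ⟨σ, τ : σⁿ = τ² = e, στ = τσ⁻¹⟩ be the dihedral group of order 2n. For a coprime to n and b ∈ Z/nZ, let φ_{a,b} be the automorphism of D_n with φ_{a,b}(τ^ε σ^i) = τ^ε σ^{ai+εb}. Then φ_{a,b} and φ_{a',b'} are conjugate in Aut(D_n) if and only if a ≡ a' (mod n) and gcd(n, 1−a, b) = gcd(n, 1−a', b'). -/

import Mathlib

open DihedralGroup

namespace DAC

variable {n : ℕ}

lemma r_pow (x : ZMod n) (k : ℕ) : (r x : DihedralGroup n) ^ k = r ((k : ZMod n) * x) := by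
  induction k with
  | zero => simp
  | succ k ih => rw [pow_succ, ih, r_mul_r]; push_cast; ring_nf

lemma r_inv (x : ZMod n) : (r x : DihedralGroup n)⁻¹ = r (-x) := rfl
lemma sr_inv (x : ZMod n) : (sr x : DihedralGroup n)⁻¹ = sr x := rfl

lemma r_zpow (x : ZMod n) (k : ℤ) : (r x : DihedralGroup n) ^ k = r ((k : ZMod n) * x) := by
  cases k with
  | ofNat k => simpa using r_pow x k
  | negSucc k => rw [zpow_negSucc, r_pow, r_inv]; congr 1; push_cast; ring

lemma r_mem_zpowers_of_dvd [NeZero n] {d : ℕ} {x : ZMod n} (h : d ∣ x.val) :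
    (r x : DihedralGroup n) ∈ Subgroup.zpowers (r (d : ZMod n)) := by
  refine ⟨(x.val / d : ℕ), ?_⟩
  show (r (d : ZMod n) : DihedralGroup n) ^ ((x.val / d : ℕ) : ℤ) = r x
  rw [r_zpow]
  congr 1
  rw [Int.cast_natCast, ← Nat.cast_mul, Nat.div_mul_cancel h, ZMod.natCast_zmod_val]

lemma closure_pair [NeZero n] (x y : ZMod n) :
    Subgroup.closure ({r x, r y} : Set (DihedralGroup n)) =
      Subgroup.zpowers (r ((Nat.gcd (Nat.gcd n x.val) y.val : ℕ) : ZMod n)) := by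
  set m := Nat.gcd n x.val with hm
  set d := Nat.gcd m y.val with hd
  apply le_antisymm
  · rw [Subgroup.closure_le]
    rintro z (rfl | rfl)
    · exact r_mem_zpowers_of_dvd ((Nat.gcd_dvd_left m y.val).trans (Nat.gcd_dvd_right n x.val))
    · exact r_mem_zpowers_of_dvd (Nat.gcd_dvd_right m y.val)
  · rw [Subgroup.zpowers_le]
    have hx : (r x : DihedralGroup n) ∈ Subgroup.closure ({r x, r y} : Set (DihedralGroup n)) :=
      Subgroup.subset_closure (by simp)
    have hy : (r y : DihedralGroup n) ∈ Subgroup.closure ({r x, r y} : Set (DihedralGroup n)) :=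
      Subgroup.subset_closure (by simp)
    have e2 := congrArg (fun t : ℤ => (t : ZMod n)) (Nat.gcd_eq_gcd_ab n x.val)
    have e1 := congrArg (fun t : ℤ => (t : ZMod n)) (Nat.gcd_eq_gcd_ab m y.val)
    simp only [Int.cast_add, Int.cast_mul, Int.cast_natCast, ZMod.natCast_self, zero_mul,
      zero_add, ZMod.natCast_zmod_val] at e1 e2
    have key : r ((d : ℕ) : ZMod n) =
        (r x : DihedralGroup n) ^ (Nat.gcdB n x.val * Nat.gcdA m y.val)
          * (r y) ^ (Nat.gcdB m y.val) := by
      rw [r_zpow, r_zpow, r_mul_r]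
      congr 1
      rw [← hd] at e1
      rw [e1, e2]
      push_cast
      ring
    rw [key]
    exact mul_mem (zpow_mem hx _) (zpow_mem hy _)

lemma card_zpowers_r [NeZero n] {d : ℕ} (h : d ∣ n) :
    Nat.card (Subgroup.zpowers (r (d : ZMod n) : DihedralGroup n)) = n / d := by
  rw [Nat.card_zpowers, orderOf_r, ZMod.val_natCast]
  congr 1
  rw [Nat.gcd_comm, ← Nat.gcd_rec, Nat.gcd_comm, Nat.gcd_eq_left h]

lemma closure_range [NeZero n] (a b : ZMod n)
    (φ : DihedralGroup n ≃* DihedralGroup n)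
    (hφr : ∀ i : ZMod n, φ (r i) = r (a * i))
    (hφs : ∀ i : ZMod n, φ (sr i) = sr (a * i + b)) :
    Subgroup.closure (Set.range fun x : DihedralGroup n => x⁻¹ * φ x) =
      Subgroup.closure ({r (1 - a), r b} : Set (DihedralGroup n)) := by
  apply le_antisymm
  · rw [Subgroup.closure_le]
    rintro z ⟨x, rfl⟩
    rcases x with i | i
    · show (r i)⁻¹ * φ (r i) ∈ _
      rw [hφr, r_inv, r_mul_r]
      have : (r (-i + a * i) : DihedralGroup n) = (r (1 - a)) ^ (-(i.val : ℤ)) := by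
        rw [r_zpow]; congr 1; push_cast; rw [ZMod.natCast_zmod_val]; ring
      rw [this]
      exact zpow_mem (Subgroup.subset_closure (by simp)) _
    · show (sr i)⁻¹ * φ (sr i) ∈ _
      rw [hφs, sr_inv, sr_mul_sr]
      have : (r (a * i + b - i) : DihedralGroup n) = (r (1 - a)) ^ (-(i.val : ℤ)) * r b := by
        rw [r_zpow, r_mul_r]; congr 1; push_cast; rw [ZMod.natCast_zmod_val]; ring
      rw [this]
      exact mul_mem (zpow_mem (Subgroup.subset_closure (by simp)) _)
        (Subgroup.subset_closure (by simp))
  · rw [Subgroup.closure_le]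
    rintro z (rfl | rfl)
    · refine Subgroup.subset_closure ⟨r (-1), ?_⟩
      show (r (-1))⁻¹ * φ (r (-1)) = _
      rw [hφr, r_inv, r_mul_r]; congr 1; ring
    · refine Subgroup.subset_closure ⟨sr 0, ?_⟩
      show (sr 0)⁻¹ * φ (sr 0) = _
      rw [hφs, sr_inv, sr_mul_sr]; congr 1; ring

lemma card_closure_eq [NeZero n] (a b : ZMod n)
    (φ : DihedralGroup n ≃* DihedralGroup n)
    (hφr : ∀ i : ZMod n, φ (r i) = r (a * i))
    (hφs : ∀ i : ZMod n, φ (sr i) = sr (a * i + b)) :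
    Nat.card (Subgroup.closure (Set.range fun x : DihedralGroup n => x⁻¹ * φ x)) =
      n / Nat.gcd (Nat.gcd n (1 - a).val) b.val := by
  rw [closure_range a b φ hφr hφs, closure_pair]
  exact card_zpowers_r ((Nat.gcd_dvd_left _ _).trans (Nat.gcd_dvd_left n (1 - a).val))

lemma card_conj (φ φ' τ : DihedralGroup n ≃* DihedralGroup n)
    (h : ∀ x, φ' x = τ (φ (τ.symm x))) :
    Nat.card (Subgroup.closure (Set.range fun x : DihedralGroup n => x⁻¹ * φ' x)) =
      Nat.card (Subgroup.closure (Set.range fun x : DihedralGroup n => x⁻¹ * φ x)) := by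
  have hs : (Set.range fun x : DihedralGroup n => x⁻¹ * φ' x) =
      ⇑τ.toMonoidHom '' (Set.range fun x : DihedralGroup n => x⁻¹ * φ x) := by
    ext z
    constructor
    · rintro ⟨x, rfl⟩
      exact ⟨(τ.symm x)⁻¹ * φ (τ.symm x), ⟨τ.symm x, rfl⟩, by
        simp [map_mul, h x]⟩
    · rintro ⟨-, ⟨x, rfl⟩, rfl⟩
      exact ⟨τ x, by simp [map_mul, h (τ x)]⟩
  rw [hs, ← MonoidHom.map_closure]
  exact Nat.card_congr (Subgroup.equivMapOfInjective _ τ.toMonoidHom τ.injective).symm.toEquiv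

/-- The affine automorphism `φ_{c,d}` of the dihedral group. -/
def aff (c : (ZMod n)ˣ) (d : ZMod n) : DihedralGroup n ≃* DihedralGroup n where
  toFun x := match x with
    | r i => r (c * i)
    | sr i => sr (c * i + d)
  invFun x := match x with
    | r i => r ((c⁻¹ : (ZMod n)ˣ) * i)
    | sr i => sr ((c⁻¹ : (ZMod n)ˣ) * (i - d))
  left_inv := by rintro (i | i) <;> simp
  right_inv := by rintro (i | i) <;> simp [mul_add, mul_sub, Units.mul_inv_cancel_left]
  map_mul' := by
    rintro (i | i) (j | j) <;>
      simp only [r_mul_r, r_mul_sr, sr_mul_r, sr_mul_sr] <;> congr 1 <;> ring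

@[simp] lemma aff_r (c : (ZMod n)ˣ) (d i : ZMod n) : aff c d (r i) = r ((c : ZMod n) * i) := rfl
@[simp] lemma aff_sr (c : (ZMod n)ˣ) (d i : ZMod n) :
    aff c d (sr i) = sr ((c : ZMod n) * i + d) := rfl
@[simp] lemma aff_symm_r (c : (ZMod n)ˣ) (d i : ZMod n) :
    (aff c d).symm (r i) = r (((c⁻¹ : (ZMod n)ˣ) : ZMod n) * i) := rfl
@[simp] lemma aff_symm_sr (c : (ZMod n)ˣ) (d i : ZMod n) :
    (aff c d).symm (sr i) = sr (((c⁻¹ : (ZMod n)ˣ) : ZMod n) * (i - d)) := rfl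

lemma exists_cd [NeZero n] (a b b' : ZMod n)
    (hg : Nat.gcd (Nat.gcd n (1 - a).val) b.val = Nat.gcd (Nat.gcd n (1 - a).val) b'.val) :
    ∃ (c : (ZMod n)ˣ) (d : ZMod n), b' = b * (c : ZMod n) + (1 - a) * d := by
  set u := (1 - a).val with hu
  set m := Nat.gcd n u with hmdef
  set g := Nat.gcd m b.val with hgdef
  have hm_dvd_n : m ∣ n := Nat.gcd_dvd_left n u
  have hm0 : m ≠ 0 := fun h => NeZero.ne n (Nat.eq_zero_of_gcd_eq_zero_left (hmdef ▸ h))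
  have hgm : g ∣ m := Nat.gcd_dvd_left m b.val
  have hgb : g ∣ b.val := Nat.gcd_dvd_right m b.val
  have hgb' : g ∣ b'.val := hg ▸ Nat.gcd_dvd_right m b'.val
  have hg0 : g ≠ 0 := fun h => hm0 (Nat.eq_zero_of_gcd_eq_zero_left (hgdef ▸ h))
  set mg := m / g with hmg
  have hmgg : mg * g = m := Nat.div_mul_cancel hgm
  have hmg_dvd_n : mg ∣ n := (Dvd.intro g hmgg).trans hm_dvd_n
  have hmg0 : mg ≠ 0 := fun h => hm0 (by rw [← hmgg, h, zero_mul])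
  haveI : NeZero mg := ⟨hmg0⟩
  have hβ : Nat.Coprime (b.val / g) mg :=
    (Nat.coprime_div_gcd_div_gcd (Nat.pos_of_ne_zero hg0)).symm
  have hβ' : Nat.Coprime (b'.val / g) mg := by
    have h := Nat.coprime_div_gcd_div_gcd (m := m) (n := b'.val)
      (by rw [← hg]; exact Nat.pos_of_ne_zero hg0)
    rw [← hg] at h
    exact h.symm
  let w : (ZMod mg)ˣ := ZMod.unitOfCoprime _ hβ' * (ZMod.unitOfCoprime _ hβ)⁻¹
  obtain ⟨c, hc⟩ := ZMod.unitsMap_surjective hmg_dvd_n w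
  refine ⟨c, ?_⟩
  have hwv : ((b.val / g : ℕ) : ZMod mg) * (((c : ZMod n).val : ℕ) : ZMod mg)
      = ((b'.val / g : ℕ) : ZMod mg) := by
    have h1 : ZMod.unitOfCoprime _ hβ * w = ZMod.unitOfCoprime _ hβ' := by
      rw [mul_comm]
      exact inv_mul_cancel_right _ _
    have h2 := congrArg (Units.val) h1
    rw [← hc] at h2
    simpa [ZMod.unitsMap, ZMod.castHom_apply, ZMod.natCast_val] using h2
  have hmod : (b.val * (c : ZMod n).val) ≡ b'.val [MOD m] := by
    have h2 : (b.val / g) * (c : ZMod n).val ≡ b'.val / g [MOD mg] :=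
      (ZMod.natCast_eq_natCast_iff _ _ _).mp (by push_cast; exact hwv)
    have h3 := Nat.ModEq.mul_left' (c := g) h2
    rw [← mul_assoc, Nat.mul_div_cancel' hgb, Nat.mul_div_cancel' hgb',
      mul_comm g mg, hmgg] at h3
    exact h3
  obtain ⟨t, ht⟩ := hmod.dvd
  have e2 := congrArg (fun t : ℤ => (t : ZMod n)) (Nat.gcd_eq_gcd_ab n u)
  simp only [Int.cast_add, Int.cast_mul, Int.cast_natCast, ZMod.natCast_self, zero_mul,
    zero_add] at e2
  rw [← hmdef] at e2
  have hu' : ((u : ℕ) : ZMod n) = 1 - a := ZMod.natCast_zmod_val _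
  refine ⟨(Nat.gcdB n u : ZMod n) * (t : ZMod n), ?_⟩
  have hcast := congrArg (fun z : ℤ => (z : ZMod n)) ht
  push_cast at hcast
  rw [ZMod.natCast_zmod_val, ZMod.natCast_zmod_val, ZMod.natCast_zmod_val] at hcast
  linear_combination hcast + (t : ZMod n) * e2
    + ((t : ZMod n) * (Nat.gcdB n u : ZMod n)) * hu'

end DAC

open DAC

/-- Conjugacy criterion for the automorphisms `φ_{a,b}` of the dihedral group `D_n`
(where `φ_{a,b}(τ^ε σ^i) = τ^ε σ^{a i + ε b}`): `φ_{a,b}` and `φ_{a',b'}` are conjugate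
in `Aut(D_n)` iff `a = a'` in `ℤ/nℤ` and `gcd(n, 1−a, b) = gcd(n, 1−a', b')`. -/
theorem dihedral_auto_conjugate_iff {n : ℕ} [NeZero n]
    (a a' b b' : ZMod n) (ha : IsUnit a) (ha' : IsUnit a')
    (φ φ' : DihedralGroup n ≃* DihedralGroup n)
    (hφr : ∀ i : ZMod n, φ (r i) = r (a * i))
    (hφs : ∀ i : ZMod n, φ (sr i) = sr (a * i + b))
    (hφ'r : ∀ i : ZMod n, φ' (r i) = r (a' * i))
    (hφ's : ∀ i : ZMod n, φ' (sr i) = sr (a' * i + b')) :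
    (∃ τ : DihedralGroup n ≃* DihedralGroup n, ∀ x, φ' x = τ (φ (τ.symm x))) ↔
    (a = a' ∧ Nat.gcd (Nat.gcd n (1 - a).val) b.val
            = Nat.gcd (Nat.gcd n (1 - a').val) b'.val) := by
  constructor
  · rintro ⟨τ, hτ⟩
    have haa : a = a' := by
      rcases Nat.lt_or_ge n 3 with hn | hn
      · have hn1 : 0 < n := NeZero.pos n
        interval_cases n
        · exact Subsingleton.elim a a'
        · have hu : ∀ x : ZMod 2, IsUnit x → x = 1 := by decide
          rw [hu a ha, hu a' ha']
      · obtain (⟨e, hy⟩ | ⟨e, hy⟩) :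
            (∃ e, τ.symm (r 1) = r e) ∨ (∃ e, τ.symm (r 1) = sr e) := by
          rcases h : τ.symm (r 1) with e | e
          exacts [Or.inl ⟨e, rfl⟩, Or.inr ⟨e, rfl⟩]
        · have h1 : τ (r e) = r 1 := by rw [← hy, MulEquiv.apply_symm_apply]
          have h2 : φ' (r 1) = r a := by
            rw [hτ (r 1), hy, hφr]
            have h3 : (r (a * e) : DihedralGroup n) = (r e) ^ a.val := by
              rw [DAC.r_pow, ZMod.natCast_zmod_val]
            rw [h3, map_pow, h1, r_one_pow, ZMod.natCast_zmod_val]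
          rw [hφ'r 1, mul_one] at h2
          exact (r.inj h2).symm
        · exfalso
          have h1 : orderOf (sr e) = n := by
            rw [← hy]
            exact (orderOf_injective τ.symm.toMonoidHom τ.symm.injective (r 1)).trans
              orderOf_r_one
          rw [orderOf_sr] at h1
          omega
    refine ⟨haa, ?_⟩
    have h1 := card_closure_eq a b φ hφr hφs
    have h2 := card_closure_eq a' b' φ' hφ'r hφ's
    have h3 := card_conj φ φ' τ hτ
    rw [h1, h2] at h3
    have d1 : Nat.gcd (Nat.gcd n (1 - a).val) b.val ∣ n :=
      (Nat.gcd_dvd_left _ _).trans (Nat.gcd_dvd_left _ _)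
    have d2 : Nat.gcd (Nat.gcd n (1 - a').val) b'.val ∣ n :=
      (Nat.gcd_dvd_left _ _).trans (Nat.gcd_dvd_left _ _)
    have h4 := congrArg (n / ·) h3
    rw [Nat.div_div_self d2 (NeZero.ne n), Nat.div_div_self d1 (NeZero.ne n)] at h4
    exact h4.symm
  · rintro ⟨rfl, hg⟩
    obtain ⟨c, d, hbd⟩ := exists_cd a b b' hg
    have hcc : (c : ZMod n) * ((c⁻¹ : (ZMod n)ˣ) : ZMod n) = 1 := Units.mul_inv c
    refine ⟨aff c d, ?_⟩
    rintro (i | i)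
    · rw [hφ'r, aff_symm_r, hφr, aff_r]
      congr 1
      linear_combination (-(a * i)) * hcc
    · rw [hφ's, aff_symm_sr, hφs, aff_sr]
      congr 1
      linear_combination hbd - (a * (i - d)) * hcc
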